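/- With the CGMY data below, the function w ↦ ((w² + 1/4)·θ₀(w) - w²·Re ψ₀(w)) / (w²·(w² + 1/4)) is Lebesgue integrable on (0,∞); equivalently, the second-order coefficient d₂ is given by an absolutely convergent integral. -/

import Mathlib

open MeasureTheory Filter Topology Complex

/-- The stable scale coefficient `σ_Y = 2·C·Γ(-Y)·|cos(πY/2)|`. -/
noncomputable def sigmaY (C Y : ℝ) : ℝ :=
  2 * C * Real.Gamma (-Y) * |Real.cos (Real.pi * Y / 2)|

/-- The martingale drift `b̃`. -/
noncomputable def btilde (C G M Y : ℝ) : ℝ :=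
  -(C * Real.Gamma (-Y) * ((M - 1) ^ Y + (G + 1) ^ Y - M ^ Y - G ^ Y))

/-- The constant `κ = b̃/2 - C·Γ(-Y)·(M^Y + G^Y)`. -/
noncomputable def kappaC (C G M Y : ℝ) : ℝ :=
  btilde C G M Y / 2 - C * Real.Gamma (-Y) * (M ^ Y + G ^ Y)

/-- The limiting stable exponent `θ₀(u) = -σ_Y·|u|^Y`. -/
noncomputable def theta0 (C Y : ℝ) (u : ℝ) : ℝ :=
  -(sigmaY C Y) * |u| ^ Y

/-- The contour-shifted characteristic exponent `ψ₀`. -/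
noncomputable def psi0 (C G M Y : ℝ) (v : ℝ) : ℂ :=
  Complex.I * (v : ℂ) * ((btilde C G M Y : ℝ) : ℂ) + ((kappaC C G M Y : ℝ) : ℂ)
    + ((C * Real.Gamma (-Y) : ℝ) : ℂ) *
      ((((M - 1/2 : ℝ) : ℂ) - Complex.I * (v : ℂ)) ^ (Y : ℂ)
        + (((G + 1/2 : ℝ) : ℂ) + Complex.I * (v : ℂ)) ^ (Y : ℂ))

/-- The rescaled exponent `θ(t,v)` in the Lipton–Lewis representation. -/
noncomputable def thetaT (C G M Y : ℝ) (t v : ℝ) : ℂ :=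
  Complex.I * (v : ℂ) * ((btilde C G M Y : ℝ) : ℂ) * ((t ^ (1 - 1/Y) : ℝ) : ℂ)
    + ((kappaC C G M Y : ℝ) : ℂ) * (t : ℂ)
    + ((C * Real.Gamma (-Y) : ℝ) : ℂ) *
      (((((M - 1/2) * t ^ (1/Y) : ℝ) : ℂ) - Complex.I * (v : ℂ)) ^ (Y : ℂ)
        + ((((G + 1/2) * t ^ (1/Y) : ℝ) : ℂ) + Complex.I * (v : ℂ)) ^ (Y : ℂ))

/-- The normalized Lipton–Lewis ATM factor `L(t)`. -/
noncomputable def LLfn (C G M Y : ℝ) (t : ℝ) : ℝ :=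
  (1 / Real.pi) *
    (∫ v in Set.Ioi (0 : ℝ),
      (1 - Complex.exp (thetaT C G M Y t v)) / (((v ^ 2 + t ^ (2/Y) / 4 : ℝ)) : ℂ)).re

/-- The first-order coefficient `d₁`. -/
noncomputable def dOne (C Y : ℝ) : ℝ :=
  (1 / Real.pi) * Real.Gamma (1 - 1/Y) * (sigmaY C Y) ^ (1/Y)

/-- The second-order coefficient `d₂`. -/
noncomputable def dTwo (C G M Y : ℝ) : ℝ :=
  (1 / Real.pi) * ∫ w in Set.Ioi (0 : ℝ),
    ((w ^ 2 + 1/4) * theta0 C Y w - w ^ 2 * (psi0 C G M Y w).re) / (w ^ 2 * (w ^ 2 + 1/4))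


lemma re_cpow_I (v Y : ℝ) (hv : 0 < v) :
    ((Complex.I * v) ^ (Y:ℂ)).re = v ^ Y * Real.cos (Real.pi * Y / 2) := by
  have hz : (Complex.I * (v:ℂ)) ≠ 0 :=
    mul_ne_zero Complex.I_ne_zero (by exact_mod_cast hv.ne')
  rw [Complex.cpow_def_of_ne_zero hz, Complex.exp_re]
  have habs : ‖Complex.I * (v:ℂ)‖ = v := by
    simp [map_mul, Complex.norm_real, abs_of_pos hv]
  have harg : Complex.arg (Complex.I * v) = Real.pi / 2 := by
    rw [Complex.arg_eq_pi_div_two_iff]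
    constructor <;> simp [hv]
  simp only [Complex.mul_re, Complex.mul_im, Complex.log_re, Complex.log_im,
    Complex.ofReal_re, Complex.ofReal_im, habs, harg]
  rw [Real.rpow_def_of_pos hv]
  ring_nf

lemma re_cpow_neg_I (v Y : ℝ) (hv : 0 < v) :
    ((-(Complex.I * v)) ^ (Y:ℂ)).re = v ^ Y * Real.cos (Real.pi * Y / 2) := by
  have hz : (-(Complex.I * (v:ℂ))) ≠ 0 :=
    neg_ne_zero.2 (mul_ne_zero Complex.I_ne_zero (by exact_mod_cast hv.ne'))
  rw [Complex.cpow_def_of_ne_zero hz, Complex.exp_re]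
  have habs : ‖-(Complex.I * (v:ℂ))‖ = v := by
    simp [map_mul, Complex.norm_real, abs_of_pos hv]
  have harg : Complex.arg (-(Complex.I * v)) = -(Real.pi / 2) := by
    rw [Complex.arg_eq_neg_pi_div_two_iff]
    constructor <;> simp [hv]
  simp only [Complex.mul_re, Complex.mul_im, Complex.log_re, Complex.log_im,
    Complex.ofReal_re, Complex.ofReal_im, habs, harg]
  rw [Real.rpow_def_of_pos hv]
  ring_nf
  rw [show Y * Real.pi * (-1 / 2) = -(Y * Real.pi * (1/2)) by ring, Real.cos_neg]


lemma cpow_mvt (Y a v : ℝ) (hY : 1 ≤ Y) (ha : 0 ≤ a) (hv : v ≠ 0) :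
    ‖((a:ℂ) + Complex.I * v) ^ (Y:ℂ) - (Complex.I * v) ^ (Y:ℂ)‖
      ≤ Y * a * (a + |v|) ^ (Y - 1) := by
  set s : Set ℂ := Complex.reLm ⁻¹' (Set.Icc 0 a) ∩ Complex.imLm ⁻¹' {v} with hs
  have hconv : Convex ℝ s :=
    ((convex_Icc 0 a).linear_preimage Complex.reLm).inter
      ((convex_singleton v).linear_preimage Complex.imLm)
  have hmem : ∀ x ∈ s, x.re ∈ Set.Icc 0 a ∧ x.im = v := fun x hx => ⟨hx.1, hx.2⟩
  set d : ℂ → ℂ := fun x => (Y:ℂ) * x ^ ((Y:ℂ) - 1) with hd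
  set f' : ℂ → (ℂ →L[ℝ] ℂ) := fun x =>
    (ContinuousLinearMap.smulRight (1 : ℂ →L[ℂ] ℂ) (d x)).restrictScalars ℝ with hf'
  have hder : ∀ x ∈ s, HasFDerivWithinAt (fun z : ℂ => z ^ (Y:ℂ)) (f' x) s x := by
    intro x hx
    have him : x.im ≠ 0 := by rw [(hmem x hx).2]; exact hv
    have hx0 : x ∈ Complex.slitPlane := Complex.mem_slitPlane_iff.2 (Or.inr him)
    exact (((Complex.hasStrictDerivAt_cpow_const hx0).hasDerivAt).hasFDerivAt.restrictScalars
      ℝ).hasFDerivWithinAt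
  have hbound : ∀ x ∈ s, ‖f' x‖ ≤ Y * (a + |v|) ^ (Y - 1) := by
    intro x hx
    have hx0 : x ≠ 0 := fun h => hv (by simpa [h] using ((hmem x hx).2).symm)
    have h1 : ‖f' x‖ = ‖d x‖ := by
      rw [hf', ContinuousLinearMap.norm_restrictScalars,
        ContinuousLinearMap.norm_smulRight_apply]
      simp
    rw [h1, hd]
    have : ‖x ^ ((Y:ℂ) - 1)‖ = ‖x‖ ^ (Y - 1) := by
      rw [show ((Y:ℂ) - 1) = ((Y - 1 : ℝ) : ℂ) by push_cast; ring]
      rw [Complex.norm_cpow_of_ne_zero hx0]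
      simp
    rw [norm_mul, this]
    have habs : ‖x‖ ≤ a + |v| := by
      refine le_trans (Complex.norm_le_abs_re_add_abs_im x) ?_
      have h2 := (hmem x hx).1
      have h3 := (hmem x hx).2
      rw [h3]
      have : |x.re| ≤ a := abs_le.2 ⟨by linarith [h2.1], h2.2⟩
      linarith
    have : ‖x‖ ^ (Y - 1) ≤ (a + |v|) ^ (Y - 1) :=
      Real.rpow_le_rpow (norm_nonneg x) habs (by linarith)
    have hYn : ‖(Y:ℂ)‖ = Y := by
      simp [Complex.norm_real, _root_.abs_of_nonneg (by linarith : (0:ℝ) ≤ Y)]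
    rw [hYn]
    exact mul_le_mul_of_nonneg_left this (by linarith)
  have hxs : Complex.I * v ∈ s := by
    constructor <;> simp [ha]
  have hys : (a:ℂ) + Complex.I * v ∈ s := by
    constructor <;> simp [ha, le_refl]
  have := hconv.norm_image_sub_le_of_norm_hasFDerivWithin_le hder hbound hxs hys
  calc ‖((a:ℂ) + Complex.I * v) ^ (Y:ℂ) - (Complex.I * v) ^ (Y:ℂ)‖
      ≤ (Y * (a + |v|) ^ (Y - 1)) * ‖((a:ℂ) + Complex.I * v) - Complex.I * v‖ := this
    _ = Y * a * (a + |v|) ^ (Y - 1) := by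
        simp only [add_sub_cancel_right, Complex.norm_real, Real.norm_eq_abs,
          _root_.abs_of_nonneg ha]
        ring

lemma theta0_eq (C Y : ℝ) (hY1 : 1 < Y) (hY2 : Y < 2) (v : ℝ) (hv : 0 < v) :
    theta0 C Y v = C * Real.Gamma (-Y) *
      (((-(Complex.I * v)) ^ (Y:ℂ)).re + ((Complex.I * v) ^ (Y:ℂ)).re) := by
  have hpi := Real.pi_pos
  have hcos : Real.cos (Real.pi * Y / 2) ≤ 0 :=
    Real.cos_nonpos_of_pi_div_two_le_of_le (by nlinarith) (by nlinarith)
  rw [re_cpow_I v Y hv, re_cpow_neg_I v Y hv]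
  unfold theta0 sigmaY
  rw [abs_of_pos hv, abs_of_nonpos hcos]
  ring

lemma psi0_re (C G M Y : ℝ) (v : ℝ) :
    (psi0 C G M Y v).re = kappaC C G M Y + C * Real.Gamma (-Y) *
      (((((M - 1/2 : ℝ) : ℂ) - Complex.I * v) ^ (Y:ℂ)).re
        + ((((G + 1/2 : ℝ) : ℂ) + Complex.I * v) ^ (Y:ℂ)).re) := by
  simp [psi0, Complex.add_re, Complex.mul_re, Complex.mul_im]

-- key bound for v ≥ 1
lemma key_bound (C G M Y : ℝ) (hG : 0 ≤ G) (hM : 1 < M)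
    (hY1 : 1 < Y) (hY2 : Y < 2) (v : ℝ) (hv : 1 ≤ v) :
    |theta0 C Y v - (psi0 C G M Y v).re| ≤
      (|kappaC C G M Y| + |C * Real.Gamma (-Y)| *
        (Y * (M - 1/2) * (M + 1/2) ^ (Y-1) + Y * (G + 1/2) * (G + 3/2) ^ (Y-1)))
        * v ^ (Y - 1) := by
  have hv0 : (0:ℝ) < v := lt_of_lt_of_le one_pos hv
  have hMt : (0:ℝ) ≤ M - 1/2 := by linarith
  have hGt : (0:ℝ) ≤ G + 1/2 := by linarith
  set Γ' := C * Real.Gamma (-Y)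
  -- difference identity
  have hdiff : theta0 C Y v - (psi0 C G M Y v).re
      = -(kappaC C G M Y)
        + Γ' * (((-(Complex.I * v)) ^ (Y:ℂ) - (((M - 1/2 : ℝ) : ℂ) - Complex.I * v) ^ (Y:ℂ)).re
          + ((Complex.I * v) ^ (Y:ℂ) - (((G + 1/2 : ℝ) : ℂ) + Complex.I * v) ^ (Y:ℂ)).re) := by
    rw [theta0_eq C Y hY1 hY2 v hv0, psi0_re]
    simp [Complex.sub_re]
    ring
  rw [hdiff]
  -- bound the two differences via the MVT lemma
  have h1 : ‖(((M - 1/2 : ℝ) : ℂ) - Complex.I * v) ^ (Y:ℂ) - (-(Complex.I * v)) ^ (Y:ℂ)‖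
      ≤ Y * (M - 1/2) * ((M - 1/2) + v) ^ (Y - 1) := by
    have := cpow_mvt Y (M - 1/2) (-v) (le_of_lt hY1) hMt (by linarith)
    have he1 : (((M - 1/2 : ℝ)):ℂ) + Complex.I * ((-v : ℝ):ℂ)
        = (((M - 1/2 : ℝ)):ℂ) - Complex.I * v := by push_cast; ring
    have he2 : (Complex.I * ((-v : ℝ):ℂ)) = -(Complex.I * v) := by push_cast; ring
    rw [he1, he2, abs_neg, abs_of_pos hv0] at this
    exact this
  have h2 : ‖(((G + 1/2 : ℝ) : ℂ) + Complex.I * v) ^ (Y:ℂ) - (Complex.I * v) ^ (Y:ℂ)‖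
      ≤ Y * (G + 1/2) * ((G + 1/2) + v) ^ (Y - 1) := by
    have := cpow_mvt Y (G + 1/2) v (le_of_lt hY1) hGt (by linarith)
    rw [abs_of_pos hv0] at this
    exact this
  -- rpow comparisons
  have hvY : (1:ℝ) ≤ v ^ (Y - 1) := by
    calc (1:ℝ) = 1 ^ (Y - 1) := (Real.one_rpow _).symm
    _ ≤ v ^ (Y - 1) := Real.rpow_le_rpow zero_le_one hv (by linarith)
  have hMv : ((M - 1/2) + v) ^ (Y - 1) ≤ (M + 1/2) ^ (Y-1) * v ^ (Y-1) := by
    have : (M - 1/2) + v ≤ (M + 1/2) * v := by nlinarith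
    calc ((M - 1/2) + v) ^ (Y - 1) ≤ ((M + 1/2) * v) ^ (Y - 1) :=
          Real.rpow_le_rpow (by linarith) this (by linarith)
    _ = (M + 1/2) ^ (Y-1) * v ^ (Y-1) := Real.mul_rpow (by linarith) (le_of_lt hv0)
  have hGv : ((G + 1/2) + v) ^ (Y - 1) ≤ (G + 3/2) ^ (Y-1) * v ^ (Y-1) := by
    have : (G + 1/2) + v ≤ (G + 3/2) * v := by nlinarith
    calc ((G + 1/2) + v) ^ (Y - 1) ≤ ((G + 3/2) * v) ^ (Y - 1) :=
          Real.rpow_le_rpow (by linarith) this (by linarith)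
    _ = (G + 3/2) ^ (Y-1) * v ^ (Y-1) := Real.mul_rpow (by linarith) (le_of_lt hv0)
  have hre1 : |((-(Complex.I * v)) ^ (Y:ℂ) - (((M - 1/2 : ℝ) : ℂ) - Complex.I * v) ^ (Y:ℂ)).re|
      ≤ Y * (M - 1/2) * ((M - 1/2) + v) ^ (Y - 1) := by
    refine le_trans (Complex.abs_re_le_norm _) ?_
    rw [← norm_neg]
    simpa [neg_sub] using h1
  have hre2 : |((Complex.I * v) ^ (Y:ℂ) - (((G + 1/2 : ℝ) : ℂ) + Complex.I * v) ^ (Y:ℂ)).re|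
      ≤ Y * (G + 1/2) * ((G + 1/2) + v) ^ (Y - 1) := by
    refine le_trans (Complex.abs_re_le_norm _) ?_
    rw [← norm_neg]
    simpa [neg_sub] using h2
  have hY0 : (0:ℝ) ≤ Y := by linarith
  have hk : |(-(kappaC C G M Y))| ≤ |kappaC C G M Y| * v ^ (Y-1) := by
    rw [abs_neg]
    nlinarith [abs_nonneg (kappaC C G M Y)]
  calc |(-(kappaC C G M Y)) + Γ' * (((-(Complex.I * v)) ^ (Y:ℂ) - (((M - 1/2 : ℝ) : ℂ) - Complex.I * v) ^ (Y:ℂ)).re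
          + ((Complex.I * v) ^ (Y:ℂ) - (((G + 1/2 : ℝ) : ℂ) + Complex.I * v) ^ (Y:ℂ)).re)|
      ≤ |(-(kappaC C G M Y))| + |Γ'| * (|((-(Complex.I * v)) ^ (Y:ℂ) - (((M - 1/2 : ℝ) : ℂ) - Complex.I * v) ^ (Y:ℂ)).re|
          + |((Complex.I * v) ^ (Y:ℂ) - (((G + 1/2 : ℝ) : ℂ) + Complex.I * v) ^ (Y:ℂ)).re|) := by
        refine le_trans (abs_add_le _ _) ?_
        gcongr
        rw [abs_mul]
        gcongr
        exact abs_add_le _ _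
    _ ≤ |kappaC C G M Y| * v ^ (Y-1) + |Γ'| * ((Y * (M - 1/2) * ((M + 1/2) ^ (Y-1) * v ^ (Y-1)))
          + (Y * (G + 1/2) * ((G + 3/2) ^ (Y-1) * v ^ (Y-1)))) := by
        refine add_le_add hk (mul_le_mul_of_nonneg_left (add_le_add ?_ ?_) (abs_nonneg _))
        · exact le_trans hre1 (mul_le_mul_of_nonneg_left hMv (mul_nonneg hY0 hMt))
        · exact le_trans hre2 (mul_le_mul_of_nonneg_left hGv (mul_nonneg hY0 hGt))
    _ = (|kappaC C G M Y| + |Γ'| * (Y * (M - 1/2) * (M + 1/2) ^ (Y-1) + Y * (G + 1/2) * (G + 3/2) ^ (Y-1))) * v ^ (Y - 1) := by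
        ring

set_option maxHeartbeats 1000000 in
/-- The integrand defining the second-order coefficient `d₂` is Lebesgue
integrable on `(0,∞)`. -/
theorem stmt3 (C G M Y : ℝ) (hC : 0 < C) (hG : 0 ≤ G) (hM : 1 < M)
    (hY1 : 1 < Y) (hY2 : Y < 2) :
    IntegrableOn
      (fun w : ℝ =>
        ((w ^ 2 + 1/4) * theta0 C Y w - w ^ 2 * (psi0 C G M Y w).re) /
          (w ^ 2 * (w ^ 2 + 1/4)))
      (Set.Ioi 0) := by
  set f := fun w : ℝ =>
    ((w ^ 2 + 1/4) * theta0 C Y w - w ^ 2 * (psi0 C G M Y w).re) /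
      (w ^ 2 * (w ^ 2 + 1/4)) with hf
  -- continuity facts
  have hY0 : (0:ℝ) < Y := by linarith
  have hth_cont : Continuous (theta0 C Y) := by
    unfold theta0
    exact continuous_const.mul (continuous_abs.rpow_const (fun x => Or.inr hY0.le))
  have hpsi_cont : Continuous (fun v : ℝ => (psi0 C G M Y v).re) := by
    apply Complex.continuous_re.comp
    unfold psi0
    refine Continuous.add (Continuous.add (by continuity) ?_) ?_
    · exact continuous_const
    refine continuous_const.mul (Continuous.add ?_ ?_)
    · refine Continuous.cpow (by continuity) continuous_const (fun a => ?_)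
      refine Complex.mem_slitPlane_iff.2 (Or.inl ?_)
      simp only [Complex.sub_re, Complex.ofReal_re, Complex.mul_re, Complex.I_re,
        Complex.I_im, Complex.ofReal_im]
      norm_num; linarith
    · refine Continuous.cpow (by continuity) continuous_const (fun a => ?_)
      refine Complex.mem_slitPlane_iff.2 (Or.inl ?_)
      simp only [Complex.add_re, Complex.ofReal_re, Complex.mul_re, Complex.I_re,
        Complex.I_im, Complex.ofReal_im]
      norm_num; linarith
  have hf_cont : ContinuousOn f (Set.Ioi (0:ℝ)) := by
    apply ContinuousOn.div
    · exact (((continuous_pow 2).add continuous_const).mul hth_cont |>.sub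
        ((continuous_pow 2).mul hpsi_cont)).continuousOn
    · exact ((continuous_pow 2).mul ((continuous_pow 2).add continuous_const)).continuousOn
    · intro x hx
      have hx0 : (0:ℝ) < x := hx
      positivity
  -- bound for psi0.re on [0,1]
  obtain ⟨B, hB⟩ := isCompact_Icc.exists_bound_of_continuousOn
    (hpsi_cont.continuousOn (s := Set.Icc (0:ℝ) 1))
  have hB0 : 0 ≤ B := le_trans (norm_nonneg _) (hB 0 ⟨le_refl _, zero_le_one⟩)
  set σ := sigmaY C Y with hσ
  set K := |kappaC C G M Y| + |C * Real.Gamma (-Y)| *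
      (Y * (M - 1/2) * (M + 1/2) ^ (Y-1) + Y * (G + 1/2) * (G + 3/2) ^ (Y-1)) with hK
  have hK0 : 0 ≤ K := by
    rw [hK]
    have h3 : (0:ℝ) ≤ (M + 1/2) ^ (Y-1) := Real.rpow_nonneg (by linarith) _
    have h4 : (0:ℝ) ≤ (G + 3/2) ^ (Y-1) := Real.rpow_nonneg (by linarith) _
    refine add_nonneg (abs_nonneg _) (mul_nonneg (abs_nonneg _) (add_nonneg ?_ ?_))
    · exact mul_nonneg (mul_nonneg hY0.le (by linarith)) h3
    · exact mul_nonneg (mul_nonneg hY0.le (by linarith)) h4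
  -- part 1 : Ioc 0 1
  have h1 : IntegrableOn f (Set.Ioc (0:ℝ) 1) := by
    have hg : IntegrableOn (fun w : ℝ => (|σ| + 4*B) * w ^ (Y-2)) (Set.Ioc (0:ℝ) 1) := by
      have := intervalIntegral.intervalIntegrable_rpow' (a := 0) (b := 1)
        (r := Y - 2) (by linarith)
      rw [intervalIntegrable_iff, Set.uIoc_of_le zero_le_one] at this
      exact this.const_mul _
    refine Integrable.mono' hg
      ((hf_cont.mono Set.Ioc_subset_Ioi_self).aestronglyMeasurable measurableSet_Ioc) ?_
    rw [ae_restrict_iff' measurableSet_Ioc]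
    refine Filter.Eventually.of_forall (fun x hx => ?_)
    obtain ⟨hx0, hx1⟩ := hx
    have hden1 : x ^ 2 ≠ 0 := by positivity
    have hden2 : x ^ 2 + 1/4 > 0 := by positivity
    have key : ∀ a b : ℝ, ((x^2+1/4)*a - x^2*b)/(x^2*(x^2+1/4))
        = a / x^2 - b / (x^2 + 1/4) := by
      intro a b; field_simp
    have hfx : f x = theta0 C Y x / x^2 - (psi0 C G M Y x).re / (x^2 + 1/4) := by
      rw [hf]; exact key _ _
    have hp1 : (1:ℝ) ≤ x ^ (Y-2) :=
      Real.one_le_rpow_of_pos_of_le_one_of_nonpos hx0 hx1 (by linarith)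
    have hth : |theta0 C Y x| / x^2 = |σ| * x ^ (Y-2) := by
      have h1' : |theta0 C Y x| = |σ| * x ^ Y := by
        unfold theta0
        rw [abs_mul, abs_neg, abs_of_pos hx0,
          _root_.abs_of_nonneg (Real.rpow_nonneg hx0.le Y)]
      rw [h1']
      rw [show x ^ Y = x ^ (Y-2) * x ^ (2:ℕ) by
        rw [← Real.rpow_natCast x 2, ← Real.rpow_add hx0]; ring_nf]
      field_simp
    have hpsibd : |(psi0 C G M Y x).re| / (x^2 + 1/4) ≤ 4 * B := by
      rw [div_le_iff₀ hden2]
      have h2' : |(psi0 C G M Y x).re| ≤ B := hB x ⟨hx0.le, hx1⟩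
      nlinarith [sq_nonneg x, mul_nonneg hB0 (sq_nonneg x)]
    calc ‖f x‖ = |theta0 C Y x / x^2 - (psi0 C G M Y x).re / (x^2 + 1/4)| := by
          rw [hfx]; rfl
      _ ≤ |theta0 C Y x| / x^2 + |(psi0 C G M Y x).re| / (x^2 + 1/4) := by
          refine le_trans (abs_sub _ _) ?_
          rw [abs_div, abs_div, abs_of_pos (by positivity : (0:ℝ) < x^2),
            abs_of_pos hden2]
      _ ≤ |σ| * x ^ (Y-2) + 4 * B := by rw [hth]; linarith
      _ ≤ (|σ| + 4*B) * x ^ (Y-2) := by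
          nlinarith [abs_nonneg σ, mul_nonneg hB0 (by linarith : (0:ℝ) ≤ x ^ (Y-2) - 1)]
  -- part 2 : Ioi 1
  have h2 : IntegrableOn f (Set.Ioi (1:ℝ)) := by
    have hg : IntegrableOn (fun w : ℝ => (|σ| + K) * w ^ (Y-3)) (Set.Ioi (1:ℝ)) :=
      (integrableOn_Ioi_rpow_of_lt (by linarith) one_pos).const_mul _
    refine Integrable.mono' hg
      ((hf_cont.mono (fun x (hx : x ∈ Set.Ioi (1:ℝ)) => (Set.mem_Ioi.2 (lt_trans one_pos (Set.mem_Ioi.1 hx)) : x ∈ Set.Ioi (0:ℝ)))).aestronglyMeasurable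
        measurableSet_Ioi) ?_
    rw [ae_restrict_iff' measurableSet_Ioi]
    refine Filter.Eventually.of_forall (fun x hx => ?_)
    have hx1 : (1:ℝ) < x := hx
    have hx0 : (0:ℝ) < x := lt_trans one_pos hx1
    have hden2 : x ^ 2 + 1/4 > 0 := by positivity
    have hp : (0:ℝ) < x ^ (Y-3) := Real.rpow_pos_of_pos hx0 _
    have e1 : x ^ Y = x ^ (Y-3) * x ^ (3:ℕ) := by
      rw [← Real.rpow_natCast x 3, ← Real.rpow_add hx0]; ring_nf
    have e2 : x ^ (Y-1) = x ^ (Y-3) * x ^ (2:ℕ) := by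
      rw [← Real.rpow_natCast x 2, ← Real.rpow_add hx0]; ring_nf
    have key : ∀ a b : ℝ, ((x^2+1/4)*a - x^2*b)/(x^2*(x^2+1/4))
        = a * (4:ℝ)⁻¹ / (x^2 * (x^2 + 1/4)) + (a - b) / (x^2 + 1/4) := by
      intro a b; field_simp; ring
    have hfx : f x = theta0 C Y x * (4:ℝ)⁻¹ / (x^2 * (x^2 + 1/4))
        + (theta0 C Y x - (psi0 C G M Y x).re) / (x^2 + 1/4) := by
      rw [hf]; exact key _ _
    have hth : |theta0 C Y x| = |σ| * (x ^ (Y-3) * x ^ (3:ℕ)) := by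
      unfold theta0
      rw [abs_mul, abs_neg, abs_of_pos hx0,
        _root_.abs_of_nonneg (Real.rpow_nonneg hx0.le Y), ← e1]
    have ht1 : |theta0 C Y x| * (4:ℝ)⁻¹ / (x^2 * (x^2 + 1/4)) ≤ |σ| * x ^ (Y-3) := by
      rw [div_le_iff₀ (by positivity), hth]
      have hx34 : x^3 ≤ x^4 := pow_le_pow_right₀ hx1.le (by norm_num)
      have hS : (0:ℝ) ≤ |σ| * x ^ (Y-3) := mul_nonneg (abs_nonneg _) hp.le
      calc |σ| * (x ^ (Y-3) * x ^ 3) * (4:ℝ)⁻¹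
          = (|σ| * x ^ (Y-3)) * (x^3 * (4:ℝ)⁻¹) := by ring
        _ ≤ (|σ| * x ^ (Y-3)) * (x^2 * (x^2 + 1/4)) := by
            refine mul_le_mul_of_nonneg_left ?_ hS
            have hexp : x^2 * (x^2 + 1/4) = x^4 + x^2/4 := by ring
            rw [hexp]
            linarith [pow_nonneg hx0.le 4, sq_nonneg x]
        _ = |σ| * x ^ (Y-3) * (x^2 * (x^2 + 1/4)) := by ring
    have ht2 : |theta0 C Y x - (psi0 C G M Y x).re| / (x^2 + 1/4) ≤ K * x ^ (Y-3) := by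
      rw [div_le_iff₀ hden2]
      have hkb := key_bound C G M Y hG hM hY1 hY2 x hx1.le
      rw [e2] at hkb
      refine le_trans hkb ?_
      calc K * (x ^ (Y-3) * x ^ 2) = (K * x ^ (Y-3)) * x^2 := by ring
        _ ≤ (K * x ^ (Y-3)) * (x^2 + 1/4) :=
            mul_le_mul_of_nonneg_left (by linarith) (mul_nonneg hK0 hp.le)
        _ = K * x ^ (Y-3) * (x^2 + 1/4) := by ring
    calc ‖f x‖ = |theta0 C Y x * (4:ℝ)⁻¹ / (x^2 * (x^2 + 1/4))
          + (theta0 C Y x - (psi0 C G M Y x).re) / (x^2 + 1/4)| := by rw [hfx]; rfl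
      _ ≤ |theta0 C Y x * (4:ℝ)⁻¹ / (x^2 * (x^2 + 1/4))|
          + |(theta0 C Y x - (psi0 C G M Y x).re) / (x^2 + 1/4)| := abs_add_le _ _
      _ ≤ |σ| * x ^ (Y-3) + K * x ^ (Y-3) := by
          refine add_le_add ?_ ?_
          · have habs : |theta0 C Y x * (4:ℝ)⁻¹ / (x^2 * (x^2 + 1/4))|
                = |theta0 C Y x| * (4:ℝ)⁻¹ / (x^2 * (x^2 + 1/4)) := by
              rw [abs_div, abs_mul, _root_.abs_of_pos (by positivity : (0:ℝ) < x^2*(x^2+1/4)),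
                _root_.abs_of_pos (by norm_num : (0:ℝ) < (4:ℝ)⁻¹)]
            rw [habs]; exact ht1
          · rw [abs_div, abs_of_pos hden2]
            exact ht2
      _ = (|σ| + K) * x ^ (Y-3) := by ring
  have := h1.union h2
  rwa [Set.Ioc_union_Ioi_eq_Ioi zero_le_one] at this
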